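/- Let G9 be the interlacement graph of the matching L9 = { {0,5}, {1,8}, {2,9}, {3,14}, {4,15}, {6,13}, {7,12}, {10,17}, {11,16} } of {0,...,17}, with vertex set {0,...,8} where vertex i corresponds to the i-th chord in the listed order and vertices i, j are adjacent if and only if the corresponding chords are interlaced. Then G9 satisfies condition B3: for any three pairwise adjacent vertices a, b, c, the sum of the number of vertices w (with w ≠ b and w ≠ c) adjacent to a but adjacent to neither b nor c, and the number of vertices w (with w ≠ a) adjacent to both b and c but not adjacent to a, is even. -/

import Mathlib

/-- Two sorted pairs (chords) are interlaced. -/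
def Interlaced (p q : ℕ × ℕ) : Prop :=
  (p.1 < q.1 ∧ q.1 < p.2 ∧ p.2 < q.2) ∨ (q.1 < p.1 ∧ p.1 < q.2 ∧ q.2 < p.2)

/-- Interlacement graph of a tuple of chords: vertex `i` corresponds to the `i`-th chord,
and two vertices are adjacent iff the corresponding chords are interlaced. -/
def interGraph {n : ℕ} (c : Fin n → ℕ × ℕ) : SimpleGraph (Fin n) where
  Adj i j := i ≠ j ∧ Interlaced (c i) (c j)
  symm := ⟨fun _ _ h => ⟨h.1.symm, Or.symm h.2⟩⟩
  loopless := ⟨fun _ h => h.1 rfl⟩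

/-- The chords of the matching `L9 = {{0,5},{1,8},{2,9},{3,14},{4,15},{6,13},{7,12},{10,17},{11,16}}`
of `{0, ..., 17}`, in the listed order. -/
def L9chords : Fin 9 → ℕ × ℕ :=
  ![(0, 5), (1, 8), (2, 9), (3, 14), (4, 15), (6, 13), (7, 12), (10, 17), (11, 16)]

/-- The interlacement graph of the matching `L9`. -/
def G9 : SimpleGraph (Fin 9) := interGraph L9chords

/-- Condition B3 (Biryukov): for any three pairwise adjacent vertices `a`, `b`, `c`,
the number of vertices `w ∉ {b, c}` adjacent to `a` but to neither `b` nor `c`, plus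
the number of vertices `w ≠ a` adjacent to both `b` and `c` but not to `a`, is even. -/
def CondB3 {V : Type*} (G : SimpleGraph V) : Prop :=
  ∀ a b c : V, G.Adj a b → G.Adj a c → G.Adj b c →
    Even ({w | w ≠ b ∧ w ≠ c ∧ G.Adj a w ∧ ¬ G.Adj b w ∧ ¬ G.Adj c w}.ncard +
          {w | w ≠ a ∧ ¬ G.Adj a w ∧ G.Adj b w ∧ G.Adj c w}.ncard)

/-- The interlacement graph `G9` of the matching `L9` satisfies condition B3. -/
instance instDecInterlaced (p q : ℕ × ℕ) : Decidable (Interlaced p q) := by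
  unfold Interlaced; infer_instance

instance instDecG9 : DecidableRel G9.Adj := fun i j =>
  show Decidable (i ≠ j ∧ Interlaced (L9chords i) (L9chords j)) from inferInstance

theorem G9_condB3 : CondB3 G9 := by
  have key : ∀ a b c : Fin 9, G9.Adj a b → G9.Adj a c → G9.Adj b c →
      Even ((Finset.univ.filter
              (fun w => w ≠ b ∧ w ≠ c ∧ G9.Adj a w ∧ ¬ G9.Adj b w ∧ ¬ G9.Adj c w)).card +
            (Finset.univ.filter
              (fun w => w ≠ a ∧ ¬ G9.Adj a w ∧ G9.Adj b w ∧ G9.Adj c w)).card) := by decide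
  intro a b c hab hac hbc
  have h1 : {w | w ≠ b ∧ w ≠ c ∧ G9.Adj a w ∧ ¬ G9.Adj b w ∧ ¬ G9.Adj c w}.ncard =
      (Finset.univ.filter
        (fun w => w ≠ b ∧ w ≠ c ∧ G9.Adj a w ∧ ¬ G9.Adj b w ∧ ¬ G9.Adj c w)).card := by
    rw [Set.ncard_eq_toFinset_card']
    congr 1
    ext w
    simp
  have h2 : {w | w ≠ a ∧ ¬ G9.Adj a w ∧ G9.Adj b w ∧ G9.Adj c w}.ncard =
      (Finset.univ.filter
        (fun w => w ≠ a ∧ ¬ G9.Adj a w ∧ G9.Adj b w ∧ G9.Adj c w)).card := by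
    rw [Set.ncard_eq_toFinset_card']
    congr 1
    ext w
    simp
  rw [h1, h2]
  exact key a b c hab hac hbc
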